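/- Let {S(t)}_{t≥0} be the right translation semigroup on L²(ℝ⁺, ρ) with ρ a continuous right admissible weight, defined by (S(t)f)(s) = 0 for s ≤ t and f(s - t) for s > t. If ρ is a polynomial of degree less than m, then S(t) is an m-isometry for every t > 0. -/

import Mathlib

open Finset MeasureTheory

open Polynomial
open scoped fwdDiff

open scoped fwdDiff

lemma my_comp_ne (t : ℝ) (p : Polynomial ℝ) (hp : p ≠ 0) : p.comp (X + C t) ≠ 0 := by
  have h : (p.comp (X + C t)).leadingCoeff ≠ 0 := by
    rw [leadingCoeff_comp (by simp)]
    simp [hp, leadingCoeff_ne_zero.mpr hp]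
  exact fun h0 => h (by simp [h0])

lemma fwd_poly_deg (t : ℝ) (p : Polynomial ℝ) (hp : p ≠ 0) :
    (p.comp (X + C t) - p).degree < p.degree := by
  have h1 : (p.comp (X + C t)).degree = p.degree := by
    rw [degree_eq_natDegree (my_comp_ne t p hp), degree_eq_natDegree hp, natDegree_comp]
    simp
  have h2 := degree_sub_lt h1 (my_comp_ne t p hp)
    (by rw [leadingCoeff_comp (by simp)]; simp)
  rwa [h1] at h2

lemma fwd_poly_zero (t : ℝ) : ∀ (m : ℕ) (p : Polynomial ℝ), p.degree < m →
    (Δ_[t])^[m] (fun x => p.eval x) = 0 := by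
  intro m
  induction m with
  | zero =>
    intro p hdeg
    have : p = 0 := by
      rw [← degree_eq_bot]
      exact Nat.WithBot.lt_zero_iff.mp (by exact_mod_cast hdeg)
    simp [this]
    rfl
  | succ m ih =>
    intro p hdeg
    rw [Function.iterate_succ_apply]
    have hΔ : Δ_[t] (fun x => p.eval x) = fun x => (p.comp (X + C t) - p).eval x := by
      funext x; simp [fwdDiff, eval_comp]
    rw [hΔ]
    apply ih
    by_cases hp : p = 0
    · simp [hp]
    · calc (p.comp (X + C t) - p).degree < p.degree := fwd_poly_deg t p hp
        _ ≤ m := by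
          rw [degree_eq_natDegree hp] at hdeg ⊢
          exact_mod_cast Nat.le_of_lt_succ (by exact_mod_cast hdeg)

lemma poly_alt_sum (t : ℝ) (m : ℕ) (p : Polynomial ℝ) (hdeg : p.degree < m) (y : ℝ) :
    ∑ k ∈ range (m + 1), ((-1 : ℝ)) ^ (m - k) * (m.choose k) * p.eval (y + k * t) = 0 := by
  have h1 := fwdDiff_iter_eq_sum_shift t (fun x : ℝ => p.eval x) m y
  rw [fwd_poly_zero t m p hdeg] at h1
  have := h1.symm
  rw [Pi.zero_apply] at this
  rw [← this]
  apply Finset.sum_congr rfl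
  intro k _
  rw [zsmul_eq_mul, nsmul_eq_mul]
  push_cast
  ring


/-- Right translation semigroup on `L²(ℝ⁺, ρ)`: since
`‖S(t)^k f‖² = ∫₀^∞ ‖f s‖² ρ(s + k t) ds`, the `m`-isometry condition for `S(t)`
is the vanishing of the alternating binomial sum of these integrals. -/
theorem stmt_15 (ρ : ℝ → ℝ) (m : ℕ) (hm : 0 < m)
    (hcont : ContinuousOn ρ (Set.Ioi 0))
    (hpos : ∀ s : ℝ, 0 < s → 0 < ρ s)
    (hadm : ∃ M : ℝ, 1 ≤ M ∧ ∃ ω : ℝ, ∀ τ : ℝ, 0 < τ → ∀ t : ℝ, 0 < t →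
      ρ (t + τ) ≤ M * Real.exp (ω * t) * ρ τ)
    (p : Polynomial ℝ) (hdeg : p.degree < m) (hp : ∀ s : ℝ, 0 < s → ρ s = p.eval s) :
    ∀ t : ℝ, 0 < t → ∀ f : ℝ → ℂ, Measurable f →
      IntegrableOn (fun s => ‖f s‖ ^ 2 * ρ s) (Set.Ioi 0) →
      ∑ k ∈ range (m + 1), ((-1 : ℝ)) ^ (m - k) * (m.choose k) *
        (∫ s in Set.Ioi (0 : ℝ), ‖f s‖ ^ 2 * ρ (s + k * t)) = 0 := by
  intro t ht f hfm hint
  obtain ⟨M, hM1, ω, hadm'⟩ := hadm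
  have hInt : ∀ k : ℕ, IntegrableOn (fun s => ‖f s‖ ^ 2 * ρ (s + k * t)) (Set.Ioi 0) := by
    intro k
    rcases Nat.eq_zero_or_pos k with hk | hk
    · simpa [hk] using hint
    · have hkt : 0 < (k : ℝ) * t := mul_pos (by exact_mod_cast hk) ht
      have hms : AEStronglyMeasurable (fun s => ‖f s‖ ^ 2 * ρ (s + k * t))
          (volume.restrict (Set.Ioi 0)) := by
        have hcont' : ContinuousOn (fun s => ρ (s + k * t)) (Set.Ioi 0) := by
          apply hcont.comp (continuous_id.add continuous_const).continuousOn
          intro s hs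
          exact add_pos hs hkt
        exact ((hfm.norm.pow_const 2).aemeasurable.mul
          (hcont'.aemeasurable measurableSet_Ioi)).aestronglyMeasurable
      apply Integrable.mono' ((hint.const_mul (M * Real.exp (ω * ((k : ℝ) * t))))) hms
      rw [ae_restrict_iff' measurableSet_Ioi]
      filter_upwards with s
      intro hs
      have hs' : (0 : ℝ) < s := hs
      have hb := hadm' s hs' ((k : ℝ) * t) hkt
      rw [Real.norm_eq_abs, abs_of_nonneg (mul_nonneg (by positivity) (hpos _ (add_pos hs' hkt)).le),
        show s + (k:ℝ)*t = (k:ℝ)*t + s by ring]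
      calc ‖f s‖ ^ 2 * ρ ((k:ℝ)*t + s) ≤ ‖f s‖ ^ 2 * (M * Real.exp (ω * ((k:ℝ)*t)) * ρ s) := by
            apply mul_le_mul_of_nonneg_left hb (by positivity)
        _ = M * Real.exp (ω * ((k : ℝ) * t)) * (‖f s‖ ^ 2 * ρ s) := by ring
  have hstep : ∀ k ∈ range (m + 1),
      ((-1 : ℝ)) ^ (m - k) * (m.choose k) * (∫ s in Set.Ioi (0 : ℝ), ‖f s‖ ^ 2 * ρ (s + k * t))
      = ∫ s in Set.Ioi (0 : ℝ), ((-1 : ℝ)) ^ (m - k) * (m.choose k) * (‖f s‖ ^ 2 * ρ (s + k * t)) := by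
    intro k _
    rw [integral_const_mul]
  rw [Finset.sum_congr rfl hstep, ← MeasureTheory.integral_finset_sum]
  · rw [MeasureTheory.setIntegral_congr_fun measurableSet_Ioi
      (g := fun _ => (0 : ℝ))]
    · simp
    · intro s hs
      have hs' : (0 : ℝ) < s := hs
      have : ∀ k ∈ range (m + 1),
          ((-1 : ℝ)) ^ (m - k) * (m.choose k) * (‖f s‖ ^ 2 * ρ (s + k * t))
          = ‖f s‖ ^ 2 * (((-1 : ℝ)) ^ (m - k) * (m.choose k) * p.eval (s + k * t)) := by
        intro k _
        rw [hp (s + k * t) (by positivity)]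
        ring
      simp only
      rw [Finset.sum_congr rfl this, ← Finset.mul_sum, poly_alt_sum t m p hdeg s, mul_zero]
  · intro k _
    exact (hInt k).const_mul _
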